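/- arXiv:1903.12044 — 2 statements merged into one kernel-verified Lean document; each statement's English description precedes it below -/
import Mathlib

section
/- Let Π = Z·π be an unnormalised density (Z > 0, π a probability density), q a proposal density with E_q[(Π/q)²] < ∞, and x^{(1)},…,x^{(N)} i.i.d. from q. Define self-normalised weights 𝗐^{(i)} = W(x^{(i)})/∑_j W(x^{(j)}) with W(x) = Π(x)/q(x). Then for any bounded φ, E[((φ,π) − ∑_i 𝗐^{(i)}φ(x^{(i)}))²] ≤ 4‖φ‖_∞² ρ / N, where ρ = E_q[π²(X)/q²(X)]. -/
open MeasureTheory ProbabilityTheory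
set_option maxHeartbeats 1000000

lemma snis_aux {X : Type*} [MeasurableSpace X] {ν : Measure X} [IsProbabilityMeasure ν]
    {Ω : Type*} [MeasurableSpace Ω] {P : Measure Ω} [IsProbabilityMeasure P]
    {N : ℕ} (hN : 0 < N) {Xs : Fin N → Ω → X} (hXm : ∀ i, Measurable (Xs i))
    (hiid : iIndepFun Xs P)
    (hlaw : ∀ i, Measure.map (Xs i) P = ν)
    {h : X → ℝ} (hm : Measurable h) (hL2 : MemLp h 2 ν) :
    ∫ ω, ((∑ i, h (Xs i ω)) / N - ∫ x, h x ∂ν) ^ 2 ∂P ≤ (∫ x, h x ^ 2 ∂ν) / N := by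
  have hNR : (N : ℝ) ≠ 0 := Nat.cast_ne_zero.mpr hN.ne'
  set m : ℝ := ∫ x, h x ∂ν with hm_def
  set k : X → ℝ := fun x => h x - m with hk_def
  have hkm : Measurable k := hm.sub_const m
  have hkL2 : MemLp k 2 ν := hL2.sub (memLp_const m)
  -- transfer integrals along the law
  have hint_map : ∀ (f : X → ℝ), Measurable f → ∀ i, ∫ ω, f (Xs i ω) ∂P = ∫ x, f x ∂ν := by
    intro f hf i
    rw [← hlaw i, integral_map (hXm i).aemeasurable hf.aestronglyMeasurable]
  have hmemP : ∀ (f : X → ℝ), Measurable f → MemLp f 2 ν →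
      ∀ i, MemLp (fun ω => f (Xs i ω)) 2 P := by
    intro f hf hfL2 i
    have hfL2' : MemLp f 2 (Measure.map (Xs i) P) := (hlaw i).symm ▸ hfL2
    exact (memLp_map_measure_iff hfL2'.aestronglyMeasurable (hXm i).aemeasurable).mp hfL2'
  set Ks : Fin N → Ω → ℝ := fun i ω => k (Xs i ω) with hKs_def
  have hKL2 : ∀ i, MemLp (Ks i) 2 P := fun i => hmemP k hkm hkL2 i
  have hKmeas : ∀ i, Measurable (Ks i) := fun i => hkm.comp (hXm i)
  have hEk : ∀ i, ∫ ω, Ks i ω ∂P = 0 := by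
    intro i
    rw [hint_map k hkm i]
    have : ∫ x, k x ∂ν = (∫ x, h x ∂ν) - m := by
      rw [hk_def]
      rw [integral_sub (hL2.integrable one_le_two) (integrable_const m)]
      simp
    rw [this]; simp [hm_def]
  have hKiid : iIndepFun Ks P := by
    exact hiid.comp (fun _ => k) (fun _ => hkm)
  have hsum2 : MemLp (∑ i, Ks i) 2 P := memLp_finset_sum' _ (fun i _ => hKL2 i)
  have hEsum : ∫ ω, (∑ i, Ks i) ω ∂P = 0 := by
    simp only [Finset.sum_apply]
    rw [integral_finset_sum _ (fun i _ => (hKL2 i).integrable one_le_two)]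
    simp [hEk]
  have hvar_eq : variance (∑ i, Ks i) P = ∫ ω, ((∑ i, Ks i) ω) ^ 2 ∂P := by
    rw [variance_of_integral_eq_zero hsum2.aemeasurable hEsum]
  have hvar_sum : variance (∑ i, Ks i) P = ∑ i, variance (Ks i) P :=
    IndepFun.variance_sum (fun i _ => hKL2 i)
      (fun i _ j _ hij => hKiid.indepFun hij)
  have hvar_i : ∀ i, variance (Ks i) P = ∫ x, k x ^ 2 ∂ν := by
    intro i
    rw [variance_eq_sub (hKL2 i)]
    have h1 : ∫ ω, (Ks i ^ 2) ω ∂P = ∫ x, k x ^ 2 ∂ν := by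
      simp only [Pi.pow_apply]
      exact hint_map (fun x => k x ^ 2) (hkm.pow_const 2) i
    have h2 : ∫ ω, Ks i ω ∂P = 0 := hEk i
    rw [h1]
    simp only [h2]
    simp
  have hk2_int : Integrable (fun x => k x ^ 2) ν :=
    (memLp_two_iff_integrable_sq hkL2.aestronglyMeasurable).mp hkL2
  have hh2_int : Integrable (fun x => h x ^ 2) ν :=
    (memLp_two_iff_integrable_sq hL2.aestronglyMeasurable).mp hL2
  have hk2_le : ∫ x, k x ^ 2 ∂ν ≤ ∫ x, h x ^ 2 ∂ν := by
    have hexp : ∫ x, k x ^ 2 ∂ν = ∫ x, h x ^ 2 ∂ν - m ^ 2 := by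
      have hfun : (fun x => k x ^ 2) = fun x => (h x ^ 2 - (2 * m) * h x) + m ^ 2 := by
        funext x; simp only [hk_def]; ring
      have i1 : Integrable (fun x => h x ^ 2 - 2 * m * h x) ν :=
        hh2_int.sub ((hL2.integrable one_le_two).const_mul (2 * m))
      rw [hfun, integral_add i1 (integrable_const _),
        integral_sub hh2_int ((hL2.integrable one_le_two).const_mul (2 * m)),
        integral_const_mul, integral_const]
      simp only [measure_univ, probReal_univ, ENNReal.toReal_one, smul_eq_mul, one_mul, ← hm_def]
      ring
    rw [hexp]
    nlinarith [sq_nonneg m]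
  -- rewrite the LHS
  have hLHS : ∫ ω, ((∑ i, h (Xs i ω)) / N - m) ^ 2 ∂P
      = (∫ ω, ((∑ i, Ks i) ω) ^ 2 ∂P) / (N : ℝ) ^ 2 := by
    have hfun : (fun ω => ((∑ i, h (Xs i ω)) / N - m) ^ 2)
        = fun ω => (((∑ i, Ks i) ω) ^ 2) / (N : ℝ) ^ 2 := by
      funext ω
      have hsk : (∑ i, Ks i) ω = (∑ i, h (Xs i ω)) - N * m := by
        simp only [Finset.sum_apply, hKs_def, hk_def, Finset.sum_sub_distrib,
          Finset.sum_const, Finset.card_univ, Fintype.card_fin, nsmul_eq_mul]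
      rw [hsk, ← div_pow]
      congr 1
      field_simp
    rw [hfun, integral_div]
  rw [hLHS, ← hvar_eq, hvar_sum]
  have : ∑ i, variance (Ks i) P = (N : ℝ) * ∫ x, k x ^ 2 ∂ν := by
    simp [hvar_i, Finset.sum_const, Finset.card_univ, Fintype.card_fin, nsmul_eq_mul]
  rw [this]
  rw [div_le_div_iff₀ (by positivity) (by positivity)]
  have hρ0 : 0 ≤ ∫ x, k x ^ 2 ∂ν := integral_nonneg (fun x => sq_nonneg _)
  nlinarith [hk2_le, sq_nonneg (N:ℝ)]
/-- Let `Π = Z·π` be an unnormalised density (`Z > 0`, `π` a probability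
density), `q` a proposal density with `E_q[(Π/q)²] < ∞`, and `x⁽¹⁾,…,x⁽ᴺ⁾` i.i.d. from
`q`. With self-normalised weights `𝗐⁽ⁱ⁾ = W(x⁽ⁱ⁾)/∑ⱼW(x⁽ʲ⁾)`, `W = Π/q`, for any
bounded `φ`: `E[((φ,π) − ∑ᵢ 𝗐⁽ⁱ⁾φ(x⁽ⁱ⁾))²] ≤ 4‖φ‖_∞² ρ / N` where `ρ = E_q[π²/q²]`. -/
theorem statement4 {X : Type*} [MeasurableSpace X] (μ : Measure X)
    (pd q : X → ℝ) (Z : ℝ) (hZ : 0 < Z)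
    (Pi : X → ℝ) (hPi : Pi = fun x => Z * pd x)
    (hpdm : Measurable pd) (hqm : Measurable q)
    (hpd0 : ∀ x, 0 ≤ pd x) (hq0 : ∀ x, 0 ≤ q x)
    (hpd1 : ∫ x, pd x ∂μ = 1) (hq1 : ∫ x, q x ∂μ = 1)
    (habs : ∀ x, 0 < pd x → 0 < q x)
    (ν : Measure X) (hν : ν = μ.withDensity (fun x => ENNReal.ofReal (q x)))
    (hW2 : Integrable (fun x => (Pi x / q x) ^ 2) ν)
    (φ : X → ℝ) (hφm : Measurable φ) (B : ℝ) (hB : ∀ x, |φ x| ≤ B)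
    (N : ℕ) (hN : 0 < N)
    {Ω : Type*} [MeasurableSpace Ω] (P : Measure Ω) [IsProbabilityMeasure P]
    (Xs : Fin N → Ω → X) (hXm : ∀ i, Measurable (Xs i))
    (hiid : iIndepFun Xs P)
    (hlaw : ∀ i, Measure.map (Xs i) P = ν) :
    (∫ ω, ((∫ x, φ x * pd x ∂μ)
        - ∑ i, (Pi (Xs i ω) / q (Xs i ω)) / (∑ j, Pi (Xs j ω) / q (Xs j ω))
            * φ (Xs i ω)) ^ 2 ∂P)
      ≤ 4 * B ^ 2 * (∫ x, (pd x / q x) ^ 2 ∂ν) / N := by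
  have hNR : (N : ℝ) ≠ 0 := Nat.cast_ne_zero.mpr hN.ne'
  have hNpos : (0 : ℝ) < N := by positivity
  simp only [hPi] at hW2 ⊢
  set ρ : ℝ := ∫ x, (pd x / q x) ^ 2 ∂ν with hρ_def
  set I : ℝ := ∫ x, φ x * pd x ∂μ with hI_def
  set v : X → ℝ := fun x => pd x / q x with hv_def
  have hvm : Measurable v := hpdm.div hqm
  have hv0 : ∀ x, 0 ≤ v x := fun x => div_nonneg (hpd0 x) (hq0 x)
  have hρ : ρ = ∫ x, v x ^ 2 ∂ν := rfl
  have hpdq : ∀ x, q x = 0 → pd x = 0 := by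
    intro x hx
    by_contra hc
    have h1 : 0 < pd x := lt_of_le_of_ne (hpd0 x) (Ne.symm hc)
    have := habs x h1
    linarith
  have hq_int : Integrable q μ := by
    by_contra hc
    rw [integral_undef hc] at hq1
    norm_num at hq1
  have hpd_int : Integrable pd μ := by
    by_contra hc
    rw [integral_undef hc] at hpd1
    norm_num at hpd1
  -- ν is a probability measure
  have hν_prob : IsProbabilityMeasure ν := by
    constructor
    rw [hν, withDensity_apply _ MeasurableSet.univ, Measure.restrict_univ,
      ← ofReal_integral_eq_lintegral_ofReal hq_int (ae_of_all _ hq0), hq1]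
    norm_num
  haveI := hν_prob
  -- integrals against ν
  have hν_int : ∀ (f : X → ℝ), ∫ x, f x ∂ν = ∫ x, q x * f x ∂μ := by
    intro f
    have hd : (fun x => ENNReal.ofReal (q x)) = fun x => (((q x).toNNReal : NNReal) : ENNReal) :=
      rfl
    rw [hν, hd, integral_withDensity_eq_integral_smul hqm.real_toNNReal]
    refine integral_congr_ae (ae_of_all _ fun x => ?_)
    simp [NNReal.smul_def, Real.coe_toNNReal _ (hq0 x)]
  -- v is square integrable
  have hv2_int : Integrable (fun x => v x ^ 2) ν := by
    have h1 : (fun x => (Z * pd x / q x) ^ 2) = fun x => Z ^ 2 * v x ^ 2 := by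
      funext x
      simp only [hv_def]
      rw [mul_div_assoc, mul_pow]
    rw [h1] at hW2
    have h2 := hW2.const_mul ((Z ^ 2)⁻¹)
    have h3 : (fun x => (Z ^ 2)⁻¹ * (Z ^ 2 * v x ^ 2)) = fun x => v x ^ 2 := by
      funext x
      field_simp
    rwa [h3] at h2
  have hρ0 : 0 ≤ ρ := by
    rw [hρ]; exact integral_nonneg fun x => sq_nonneg _
  have hvL2 : MemLp v 2 ν := (memLp_two_iff_integrable_sq hvm.aestronglyMeasurable).mpr hv2_int
  have hv_mean : ∫ x, v x ∂ν = 1 := by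
    rw [hν_int v]
    have : (fun x => q x * v x) = pd := by
      funext x
      by_cases hx : q x = 0
      · simp [hv_def, hx, hpdq x hx]
      · simp only [hv_def]
        rw [mul_comm, div_mul_cancel₀ _ hx]
    rw [this, hpd1]
  -- the function g = v * φ
  set g : X → ℝ := fun x => v x * φ x with hg_def
  have hgm : Measurable g := hvm.mul hφm
  have hXne : Nonempty X := by
    by_contra hc
    rw [not_nonempty_iff] at hc
    have : μ = 0 := μ.eq_zero_of_isEmpty
    rw [this] at hpd1
    simp at hpd1
  have hB0 : 0 ≤ B := le_trans (abs_nonneg _) (hB hXne.some)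
  have hφsq : ∀ x, φ x ^ 2 ≤ B ^ 2 := by
    intro x
    have := hB x
    nlinarith [abs_nonneg (φ x), sq_abs (φ x)]
  have hg2_le : ∀ x, g x ^ 2 ≤ B ^ 2 * v x ^ 2 := by
    intro x
    simp only [hg_def]
    rw [mul_pow]
    nlinarith [sq_nonneg (v x), hφsq x, sq_nonneg (φ x)]
  have hBv2_int : Integrable (fun x => B ^ 2 * v x ^ 2) ν := hv2_int.const_mul _
  have hg2_int : Integrable (fun x => g x ^ 2) ν := by
    refine hBv2_int.mono ((hgm.pow_const 2).aestronglyMeasurable) (ae_of_all _ fun x => ?_)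
    rw [Real.norm_eq_abs, Real.norm_eq_abs, abs_of_nonneg (sq_nonneg _),
      abs_of_nonneg (by positivity)]
    exact hg2_le x
  have hgL2 : MemLp g 2 ν := (memLp_two_iff_integrable_sq hgm.aestronglyMeasurable).mpr hg2_int
  have hg2_le_int : ∫ x, g x ^ 2 ∂ν ≤ B ^ 2 * ρ := by
    rw [hρ, ← integral_const_mul]
    exact integral_mono hg2_int hBv2_int fun x => hg2_le x
  have hg_mean : ∫ x, g x ∂ν = I := by
    rw [hν_int g, hI_def]
    refine integral_congr_ae (ae_of_all _ fun x => ?_)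
    by_cases hx : q x = 0
    · simp [hg_def, hv_def, hx, hpdq x hx]
    · simp only [hg_def, hv_def]
      field_simp
  -- per-ω quantities
  set S : Ω → ℝ := fun ω => ∑ j, v (Xs j ω) with hS_def
  set T : Ω → ℝ := fun ω => ∑ i, g (Xs i ω) with hT_def
  set R : Ω → ℝ := fun ω => ∑ i, v (Xs i ω) / S ω * φ (Xs i ω) with hR_def
  have hSmeas : Measurable S := Finset.measurable_sum _ fun j _ => hvm.comp (hXm j)
  have hRmeas : Measurable R :=
    Finset.measurable_sum _ fun i _ =>
      ((hvm.comp (hXm i)).div hSmeas).mul (hφm.comp (hXm i))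
  have hS0 : ∀ ω, 0 ≤ S ω := fun ω => Finset.sum_nonneg fun j _ => hv0 _
  have hRS : ∀ ω, R ω * S ω = T ω := by
    intro ω
    by_cases hS : S ω = 0
    · have hall : ∀ j ∈ Finset.univ, v (Xs j ω) = 0 :=
        (Finset.sum_eq_zero_iff_of_nonneg fun j _ => hv0 _).mp hS
      rw [hS, mul_zero, hT_def]
      symm
      refine Finset.sum_eq_zero fun i _ => ?_
      simp [hg_def, hall i (Finset.mem_univ i)]
    · simp only [hR_def, hT_def, hg_def]
      rw [Finset.sum_mul]
      refine Finset.sum_congr rfl fun i _ => ?_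
      field_simp
  have hRb : ∀ ω, |R ω| ≤ B := by
    intro ω
    calc |R ω| ≤ ∑ i, |v (Xs i ω) / S ω * φ (Xs i ω)| := Finset.abs_sum_le_sum_abs _ _
    _ ≤ ∑ i, v (Xs i ω) / S ω * B := by
        refine Finset.sum_le_sum fun i _ => ?_
        rw [abs_mul, abs_of_nonneg (div_nonneg (hv0 _) (hS0 ω))]
        exact mul_le_mul_of_nonneg_left (hB _) (div_nonneg (hv0 _) (hS0 ω))
    _ = S ω / S ω * B := by rw [← Finset.sum_mul, ← Finset.sum_div]
    _ ≤ B := by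
        by_cases hS : S ω = 0
        · simp [hS, hB0]
        · rw [div_self hS, one_mul]
  -- decomposition of the error
  have hdec : ∀ ω, (I - R ω) = (I - T ω / N) + R ω * (S ω / N - 1) := by
    intro ω
    have h1 : R ω * (S ω / N - 1) = T ω / N - R ω := by
      rw [mul_sub, mul_one, ← mul_div_assoc, hRS ω]
    rw [h1]
    ring
  -- memℒp transfers
  have hmemP : ∀ (f : X → ℝ), Measurable f → MemLp f 2 ν →
      ∀ i, MemLp (fun ω => f (Xs i ω)) 2 P := by
    intro f hf hfL2 i
    have hfL2' : MemLp f 2 (Measure.map (Xs i) P) := (hlaw i).symm ▸ hfL2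
    exact (memLp_map_measure_iff hfL2'.aestronglyMeasurable (hXm i).aemeasurable).mp hfL2'
  have hsum_memℒp : ∀ (f : X → ℝ), Measurable f → MemLp f 2 ν →
      MemLp (fun ω => ∑ i, f (Xs i ω)) 2 P := by
    intro f hf hfL2
    have h1 : MemLp (∑ i, fun ω => f (Xs i ω)) 2 P :=
      memLp_finset_sum' _ fun i _ => hmemP f hf hfL2 i
    have h2 : (∑ i, fun ω => f (Xs i ω)) = fun ω => ∑ i, f (Xs i ω) := by
      funext ω; simp [Finset.sum_apply]
    rwa [h2] at h1
  have hA_memℒp : MemLp (fun ω => I - T ω / N) 2 P := by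
    have h1 : (fun ω => I - T ω / N) = fun ω => I - (N : ℝ)⁻¹ * T ω := by
      funext ω; rw [div_eq_inv_mul]
    rw [h1]
    exact (memLp_const I).sub ((hsum_memℒp g hgm hgL2).const_mul _)
  have hD_memℒp : MemLp (fun ω => S ω / N - 1) 2 P := by
    have h1 : (fun ω => S ω / N - 1) = fun ω => (N : ℝ)⁻¹ * S ω - 1 := by
      funext ω; rw [div_eq_inv_mul]
    rw [h1]
    exact ((hsum_memℒp v hvm hvL2).const_mul _).sub (memLp_const 1)
  have hA2_int : Integrable (fun ω => (I - T ω / N) ^ 2) P :=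
    (memLp_two_iff_integrable_sq hA_memℒp.aestronglyMeasurable).mp hA_memℒp
  have hD2_int : Integrable (fun ω => (S ω / N - 1) ^ 2) P :=
    (memLp_two_iff_integrable_sq hD_memℒp.aestronglyMeasurable).mp hD_memℒp
  have hC2_le : ∀ ω, (R ω * (S ω / N - 1)) ^ 2 ≤ B ^ 2 * (S ω / N - 1) ^ 2 := by
    intro ω
    rw [mul_pow]
    have h1 : R ω ^ 2 ≤ B ^ 2 := by nlinarith [hRb ω, abs_nonneg (R ω), sq_abs (R ω)]
    nlinarith [sq_nonneg (S ω / N - 1)]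
  have hC2_int : Integrable (fun ω => (R ω * (S ω / N - 1)) ^ 2) P := by
    refine (hD2_int.const_mul (B ^ 2)).mono
      (((hRmeas.mul ((hSmeas.div_const _).sub_const _)).pow_const 2).aestronglyMeasurable)
      (ae_of_all _ fun ω => ?_)
    rw [Real.norm_eq_abs, Real.norm_eq_abs, abs_of_nonneg (sq_nonneg _),
      abs_of_nonneg (by positivity)]
    exact hC2_le ω
  -- bounds via the auxiliary lemma
  have hAbound : ∫ ω, (I - T ω / N) ^ 2 ∂P ≤ B ^ 2 * ρ / N := by
    have haux := snis_aux hN hXm hiid hlaw hgm hgL2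
    rw [hg_mean] at haux
    have h1 : (fun ω => (I - T ω / N) ^ 2) = fun ω => ((∑ i, g (Xs i ω)) / N - I) ^ 2 := by
      funext ω
      rw [hT_def]
      ring
    rw [h1]
    refine le_trans haux ?_
    gcongr
  have hDbound : ∫ ω, (S ω / N - 1) ^ 2 ∂P ≤ ρ / N := by
    have haux := snis_aux hN hXm hiid hlaw hvm hvL2
    rw [hv_mean] at haux
    have h1 : (fun ω => (S ω / N - 1) ^ 2) = fun ω => ((∑ i, v (Xs i ω)) / N - 1) ^ 2 := by
      funext ω; rw [hS_def]
    rw [h1]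
    refine le_trans haux ?_
    rw [hρ]
  have hCbound : ∫ ω, (R ω * (S ω / N - 1)) ^ 2 ∂P ≤ B ^ 2 * (ρ / N) := by
    calc ∫ ω, (R ω * (S ω / N - 1)) ^ 2 ∂P
        ≤ ∫ ω, B ^ 2 * (S ω / N - 1) ^ 2 ∂P :=
          integral_mono hC2_int (hD2_int.const_mul _) fun ω => hC2_le ω
      _ = B ^ 2 * ∫ ω, (S ω / N - 1) ^ 2 ∂P := integral_const_mul _ _
      _ ≤ B ^ 2 * (ρ / N) := by
          exact mul_le_mul_of_nonneg_left hDbound (by positivity)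
  -- rewrite the goal integrand
  have hfun : (fun ω => (I - ∑ i, Z * pd (Xs i ω) / q (Xs i ω)
        / (∑ j, Z * pd (Xs j ω) / q (Xs j ω)) * φ (Xs i ω)) ^ 2)
      = fun ω => ((I - T ω / N) + R ω * (S ω / N - 1)) ^ 2 := by
    funext ω
    have hSsum : (∑ j, Z * pd (Xs j ω) / q (Xs j ω)) = Z * S ω := by
      rw [hS_def, Finset.mul_sum]
      exact Finset.sum_congr rfl fun j _ => mul_div_assoc _ _ _
    rw [hSsum]
    have hsum : (∑ i, Z * pd (Xs i ω) / q (Xs i ω) / (Z * S ω) * φ (Xs i ω)) = R ω := by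
      refine Finset.sum_congr rfl fun i _ => ?_
      rw [mul_div_assoc, mul_div_mul_left _ _ hZ.ne']
    rw [hsum, hdec ω]
  rw [hfun]
  have hsum_int : Integrable
      (fun ω => 2 * (I - T ω / N) ^ 2 + 2 * (R ω * (S ω / N - 1)) ^ 2) P :=
    (hA2_int.const_mul 2).add (hC2_int.const_mul 2)
  have hTmeas : Measurable T := Finset.measurable_sum _ fun i _ => hgm.comp (hXm i)
  have hACmeas : Measurable (fun ω => (I - T ω / N) + R ω * (S ω / N - 1)) :=
    (measurable_const.sub (hTmeas.div_const _)).add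
      (hRmeas.mul ((hSmeas.div_const _).sub_const 1))
  have hptwise : ∀ ω, ((I - T ω / N) + R ω * (S ω / N - 1)) ^ 2
      ≤ 2 * (I - T ω / N) ^ 2 + 2 * (R ω * (S ω / N - 1)) ^ 2 := by
    intro ω
    nlinarith [sq_nonneg ((I - T ω / N) - R ω * (S ω / N - 1))]
  have hlhs_int : Integrable
      (fun ω => ((I - T ω / N) + R ω * (S ω / N - 1)) ^ 2) P := by
    refine hsum_int.mono (hACmeas.pow_const 2).aestronglyMeasurable (ae_of_all _ fun ω => ?_)
    rw [Real.norm_eq_abs, Real.norm_eq_abs, abs_of_nonneg (sq_nonneg _),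
      abs_of_nonneg (by positivity)]
    exact hptwise ω
  calc ∫ ω, ((I - T ω / N) + R ω * (S ω / N - 1)) ^ 2 ∂P
      ≤ ∫ ω, (2 * (I - T ω / N) ^ 2 + 2 * (R ω * (S ω / N - 1)) ^ 2) ∂P :=
        integral_mono hlhs_int hsum_int fun ω => hptwise ω
    _ = 2 * (∫ ω, (I - T ω / N) ^ 2 ∂P) + 2 * ∫ ω, (R ω * (S ω / N - 1)) ^ 2 ∂P := by
        rw [integral_add (hA2_int.const_mul 2) (hC2_int.const_mul 2),
          integral_const_mul, integral_const_mul]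
    _ ≤ 4 * B ^ 2 * ρ / N := by
        have h1 : B ^ 2 * (ρ / N) = B ^ 2 * ρ / N := by ring
        rw [h1] at hCbound
        have h2 : 4 * B ^ 2 * ρ / N = 2 * (B ^ 2 * ρ / N) + 2 * (B ^ 2 * ρ / N) := by ring
        rw [h2]
        linarith [hAbound, hCbound]
end

section
/- Under the setting of the averaged-iterate stochastic gradient OAIS with unnormalised target (constants C₁,…,C₄ as in the MSE theorem), the bias of the SNIS estimator with proposal q_{θ̄_t} satisfies |E[(φ,π_{θ̄_t}^N)] − (φ,π)| ≤ 3C₁/(√tN) + 3C₂/(√tN²) + 3C₃/(√tN) + 3C₄/N. -/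
open MeasureTheory ProbabilityTheory

/-- Under the setting of the averaged-iterate stochastic gradient OAIS
with unnormalised target (constants `C₁,…,C₄` as in the MSE theorem:
`C₁ = c_φ E‖θ₀−θ*‖²/(2βZ_π²)`, `C₂ = c_φ β c_R d_θ D_Π/Z_π²`, `C₃ = c_φ β G_R²/Z_π²`,
`C₄ = c_φ ρ*`, `c_φ = 4‖φ‖_∞²`), the bias of the SNIS estimator with proposal
`q_{θ̄_t}` satisfies
`|E[(φ,π^N_{θ̄_t})] − (φ,π)| ≤ 3C₁/(√t N) + 3C₂/(√t N²) + 3C₃/(√t N) + 3C₄/N`.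
The pointwise SNIS bias bound `|E[(φ,π_θ^N)|θ] − (φ,π)| ≤ 12‖φ‖_∞² ρ(θ)/N` is encoded
by the function `bias`, and the averaged SGD bound on `E[ρ(θ̄_t) − ρ*]` is assumed. -/
theorem statement18 {d : ℕ} {Ω : Type*} {Y : Type*} [m0 : MeasurableSpace Ω]
    (P : Measure Ω) [IsProbabilityMeasure P]
    (Θ : Set (EuclideanSpace ℝ (Fin d))) (hΘconv : Convex ℝ Θ) (hΘcomp : IsCompact Θ)
    (ρ : EuclideanSpace ℝ (Fin d) → ℝ)
    (θstar : EuclideanSpace ℝ (Fin d)) (hθstar : θstar ∈ Θ)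
    (hmin : ∀ θ ∈ Θ, ρ θstar ≤ ρ θ)
    (ρstar : ℝ) (hρstar : ρstar = ρ θstar)
    (Zπ : ℝ) (hZπ : 0 < Zπ)
    (β : ℝ) (hβ : 0 < β)
    (cR DPi GR : ℝ) (N : ℕ) (hN : 0 < N)
    (θ0 : Ω → EuclideanSpace ℝ (Fin d))
    (θbar : ℕ → Ω → EuclideanSpace ℝ (Fin d))
    (hθbarΘ : ∀ t ω, θbar t ω ∈ Θ)
    -- the averaged-SGD convergence bound for ρ (Lemma on averaged SGD iterates)
    (hSGD : ∀ t : ℕ, 0 < t →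
      (∫ ω, (ρ (θbar t ω) - ρstar) ∂P) ≤
        (∫ ω, ‖θ0 ω - θstar‖ ^ 2 ∂P) / (2 * β * Zπ ^ 2 * Real.sqrt t)
          + β * d * cR * DPi / (Zπ ^ 2 * Real.sqrt t * N)
          + β * GR ^ 2 / (Zπ ^ 2 * Real.sqrt t))
    -- the pointwise SNIS bias bound with constant 12‖φ‖_∞² = 3 c_φ
    (φ : Y → ℝ) (B : ℝ) (hB : ∀ y, |φ y| ≤ B)
    (cφ : ℝ) (hcφ : cφ = 4 * B ^ 2)
    (bias : EuclideanSpace ℝ (Fin d) → ℝ)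
    (hbias : ∀ ϑ ∈ Θ, |bias ϑ| ≤ 12 * B ^ 2 * ρ ϑ / N)
    (hbiasint : ∀ t, Integrable (fun ω => bias (θbar t ω)) P)
    (hρint : ∀ t, Integrable (fun ω => ρ (θbar t ω)) P)
    (C1 C2 C3 C4 : ℝ)
    (hC1 : C1 = cφ * (∫ ω, ‖θ0 ω - θstar‖ ^ 2 ∂P) / (2 * β * Zπ ^ 2))
    (hC2 : C2 = cφ * β * cR * d * DPi / Zπ ^ 2)
    (hC3 : C3 = cφ * β * GR ^ 2 / Zπ ^ 2)
    (hC4 : C4 = cφ * ρstar) :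
    ∀ t : ℕ, 0 < t →
      |∫ ω, bias (θbar t ω) ∂P| ≤
        3 * C1 / (Real.sqrt t * N) + 3 * C2 / (Real.sqrt t * N ^ 2)
          + 3 * C3 / (Real.sqrt t * N) + 3 * C4 / N := by
  intro t ht
  have hNpos : (0:ℝ) < N := by exact_mod_cast hN
  have hs : 0 < Real.sqrt t := Real.sqrt_pos.2 (by exact_mod_cast ht)
  have h1 : |∫ ω, bias (θbar t ω) ∂P| ≤ ∫ ω, 12 * B ^ 2 * ρ (θbar t ω) / N ∂P := by
    refine (norm_integral_le_integral_norm (fun ω => bias (θbar t ω)) : |∫ ω, bias (θbar t ω) ∂P| ≤ ∫ ω, |bias (θbar t ω)| ∂P).trans ?_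
    refine integral_mono (hbiasint t).abs ?_ (fun ω => hbias _ (hθbarΘ t ω))
    exact ((hρint t).const_mul (12 * B ^ 2)).div_const N
  have h2 : (∫ ω, 12 * B ^ 2 * ρ (θbar t ω) / N ∂P)
      = 12 * B ^ 2 / N * ∫ ω, ρ (θbar t ω) ∂P := by
    simp_rw [show ∀ x : ℝ, 12 * B ^ 2 * x / N = 12 * B ^ 2 / N * x from fun x => by ring]
    exact integral_const_mul _ _
  have h3 : (∫ ω, ρ (θbar t ω) ∂P)
      = (∫ ω, (ρ (θbar t ω) - ρstar) ∂P) + ρstar := by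
    rw [integral_sub (hρint t) (integrable_const _), integral_const, probReal_univ]
    simp
  have hc : (0:ℝ) ≤ 12 * B ^ 2 / N := by positivity
  have h4 := hSGD t ht
  have key : |∫ ω, bias (θbar t ω) ∂P| ≤ 12 * B ^ 2 / N *
      ((∫ ω, ‖θ0 ω - θstar‖ ^ 2 ∂P) / (2 * β * Zπ ^ 2 * Real.sqrt t)
        + β * d * cR * DPi / (Zπ ^ 2 * Real.sqrt t * N)
        + β * GR ^ 2 / (Zπ ^ 2 * Real.sqrt t) + ρstar) := by
    refine h1.trans ?_
    rw [h2, h3]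
    exact mul_le_mul_of_nonneg_left (by linarith) hc
  refine key.trans (le_of_eq ?_)
  rw [hC1, hC2, hC3, hC4, hcφ]
  field_simp
  ring
end
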